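/- Let α, γ ∈ (−1,1) and 0 < a < b, and set J = ∫_a^b y^{−α} ( ∫_0^a z^{α} (y−z)^{−γ} dz ) dy. Then J = (a^{2−γ}/(2−γ)) ∫_{a/b}^1 v^{α+γ−2} (1−v)^{−γ} dv + (b^{2−γ}/(2−γ)) ∫_0^{a/b} v^{α} (1−v)^{−γ} dv − (a^{2−γ}/(2−γ)) β(α+1, 1−γ). -/

import Mathlib

open MeasureTheory Set Filter

/-- The Beta function `β(x,y) = Γ(x)Γ(y)/Γ(x+y)`. -/
noncomputable def Beta (x y : ℝ) : ℝ := Real.Gamma x * Real.Gamma y / Real.Gamma (x + y)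

/-- The normalizing constant `c_H = (H(2H−1)/β(2−2H, H−1/2))^{1/2}`. -/
noncomputable def cH (H : ℝ) : ℝ := Real.sqrt (H * (2 * H - 1) / Beta (2 - 2 * H) (H - 1 / 2))

/-- The kernel `K_H(t,s)`; equal to
`c_{H_t} s^{1/2−H_t} ∫_s^t (u−s)^{H_t−3/2} u^{H_t−1/2} du` for `s ≤ t` and `0` for `s > t`. -/
noncomputable def KH (H : ℝ → ℝ) (t s : ℝ) : ℝ :=
  if s ≤ t then
    cH (H t) * s ^ ((1 : ℝ) / 2 - H t) *
      ∫ u in s..t, (u - s) ^ (H t - 3 / 2) * u ^ (H t - 1 / 2)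
  else 0

/-- The covariance function `R_H(t,s) = ∫_0^{min(s,t)} K_H(t,u) K_H(s,u) du`. -/
noncomputable def RH (H : ℝ → ℝ) (t s : ℝ) : ℝ :=
  ∫ u in (0 : ℝ)..(min s t), KH H t u * KH H s u

section AuxDoubleIntegral

open Topology intervalIntegral

variable {α γ a b c : ℝ}

lemma complex_eq (α γ : ℝ) :
    Complex.betaIntegral ((α:ℂ)+1) (1-(γ:ℂ))
      = ((∫ v in (0:ℝ)..1, v ^ α * (1 - v) ^ (-γ) : ℝ) : ℂ) := by
  rw [Complex.betaIntegral, ← intervalIntegral.integral_ofReal]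
  apply intervalIntegral.integral_congr
  intro x hx
  rw [Set.uIcc_of_le (by norm_num : (0:ℝ) ≤ 1)] at hx
  have h1 : (0:ℝ) ≤ x := hx.1
  have h2 : (0:ℝ) ≤ 1 - x := by linarith [hx.2]
  rw [show ((α:ℂ)+1) - 1 = (α:ℂ) by ring, show 1-(γ:ℂ) - 1 = ((-γ:ℝ):ℂ) by push_cast; ring]
  show (x:ℂ) ^ (α:ℂ) * (1-(x:ℂ)) ^ ((-γ:ℝ):ℂ) = ((x ^ α * (1 - x) ^ (-γ) : ℝ) : ℂ)
  rw [← Complex.ofReal_cpow h1, ← Complex.ofReal_one, ← Complex.ofReal_sub,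
    ← Complex.ofReal_cpow h2, ← Complex.ofReal_mul]

lemma intInt_beta {α γ : ℝ} (hα : -1 < α) (hγ : γ < 1) :
    IntervalIntegrable (fun v : ℝ => v ^ α * (1 - v) ^ (-γ)) volume 0 1 := by
  have hc := Complex.betaIntegral_convergent (u := (α:ℂ)+1) (v := 1-(γ:ℂ))
    (by simp; linarith) (by simp; linarith)
  rw [intervalIntegrable_iff_integrableOn_Ioc_of_le (by norm_num)] at hc ⊢
  have hre : IntegrableOn (fun x : ℝ => (((x:ℂ) ^ ((α:ℂ)+1-1) * (1-(x:ℂ)) ^ (1-(γ:ℂ)-1)).re)) (Ioc 0 1) volume := hc.re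
  apply hre.congr_fun ?_ measurableSet_Ioc
  intro x hx
  have h1 : (0:ℝ) ≤ x := le_of_lt hx.1
  have h2 : (0:ℝ) ≤ 1 - x := by linarith [hx.2]
  show ((x:ℂ) ^ ((α:ℂ)+1-1) * (1-(x:ℂ)) ^ (1-(γ:ℂ)-1)).re = x ^ α * (1 - x) ^ (-γ)
  rw [show ((α:ℂ)+1) - 1 = (α:ℂ) by ring, show (1-(γ:ℂ)) - 1 = ((-γ:ℝ):ℂ) by push_cast; ring]
  rw [← Complex.ofReal_cpow h1, ← Complex.ofReal_one, ← Complex.ofReal_sub,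
    ← Complex.ofReal_cpow h2, ← Complex.ofReal_mul, Complex.ofReal_re]

lemma beta_eval {α γ : ℝ} (hα : -1 < α) (hγ : γ < 1) :
    ∫ v in (0:ℝ)..1, v ^ α * (1 - v) ^ (-γ) = Beta (α + 1) (1 - γ) := by
  have h := Complex.Gamma_mul_Gamma_eq_betaIntegral (s := (α:ℂ)+1) (t := 1-(γ:ℂ))
    (by simp; linarith) (by simp; linarith)
  rw [complex_eq] at h
  have hcast : ((α:ℂ)+1) = ((α+1 : ℝ) : ℂ) := by push_cast; ring
  have hcast2 : (1-(γ:ℂ)) = ((1-γ : ℝ) : ℂ) := by push_cast; ring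
  have hcast3 : ((α:ℂ)+1) + (1-(γ:ℂ)) = (((α+1)+(1-γ) : ℝ) : ℂ) := by push_cast; ring
  rw [hcast, hcast2] at h
  rw [show ((α+1:ℝ):ℂ) + ((1-γ:ℝ):ℂ) = (((α+1)+(1-γ) : ℝ) : ℂ) by push_cast; ring] at h
  rw [Complex.Gamma_ofReal, Complex.Gamma_ofReal, Complex.Gamma_ofReal,
    ← Complex.ofReal_mul, ← Complex.ofReal_mul] at h
  have h' := Complex.ofReal_inj.mp h
  have hpos : 0 < Real.Gamma ((α+1)+(1-γ)) := Real.Gamma_pos_of_pos (by linarith)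
  rw [Beta]
  field_simp
  linarith [h']

lemma rpow_flip {a c : ℝ} (ha : 0 < a) (hc : 0 < c) (γ : ℝ) :
    a ^ (2 - γ) * (a / c) ^ (γ - 2) = c ^ (2 - γ) := by
  rw [Real.div_rpow ha.le hc.le, show γ - 2 = -(2-γ) by ring, Real.rpow_neg ha.le,
    Real.rpow_neg hc.le]
  have h1 : a ^ (2-γ) ≠ 0 := (Real.rpow_pos_of_pos ha _).ne'
  have h2 : c ^ (2-γ) ≠ 0 := (Real.rpow_pos_of_pos hc _).ne'
  field_simp

lemma rpow_helper {a v : ℝ} (ha : 0 < a) (hv : 0 < v) (γ : ℝ) :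
    a / v ^ 2 * (a / v) ^ (1 - γ) = a ^ (2 - γ) * v ^ (γ - 3) := by
  rw [Real.div_rpow ha.le hv.le, div_mul_div_comm,
      show a * a ^ (1-γ) = a ^ (2-γ) by
        rw [show (2:ℝ)-γ = 1+(1-γ) by ring, Real.rpow_add ha, Real.rpow_one],
      show v ^ (2:ℕ) * v ^ (1-γ) = v ^ (3-γ) by
        rw [← Real.rpow_natCast v 2, ← Real.rpow_add hv]; norm_num; congr 1; ring,
      show v ^ (γ-3) = (v ^ (3-γ))⁻¹ by
        rw [← Real.rpow_neg hv.le]; ring_nf,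
      div_eq_mul_inv]

lemma inner_sub (hay : 0 < a) (ha : a ≤ y) (α γ : ℝ) :
    (∫ z in (0:ℝ)..a, z ^ α * (y - z) ^ (-γ))
      = y ^ (α + 1 - γ) * ∫ v in (0:ℝ)..(a/y), v ^ α * (1 - v) ^ (-γ) := by
  have hy : 0 < y := lt_of_lt_of_le hay ha
  have h := intervalIntegral.integral_comp_mul_left
    (fun z => z ^ α * (y - z) ^ (-γ)) (c := y) hy.ne' (a := 0) (b := a/y)
  rw [mul_zero, mul_div_cancel₀ _ hy.ne'] at h
  have h2 : (∫ z in (0:ℝ)..a, z ^ α * (y - z) ^ (-γ))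
      = y • ∫ v in (0:ℝ)..(a/y), (y*v) ^ α * (y - y*v) ^ (-γ) := by
    rw [h, smul_smul, mul_inv_cancel₀ hy.ne', one_smul]
  rw [h2, smul_eq_mul]
  have h3 : (∫ v in (0:ℝ)..(a/y), (y*v) ^ α * (y - y*v) ^ (-γ))
      = ∫ v in (0:ℝ)..(a/y), (y ^ α * y ^ (-γ)) * (v ^ α * (1 - v) ^ (-γ)) := by
    apply intervalIntegral.integral_congr
    intro v hv
    rw [Set.uIcc_of_le (by positivity)] at hv
    show (y*v) ^ α * (y - y*v) ^ (-γ) = y ^ α * y ^ (-γ) * (v ^ α * (1 - v) ^ (-γ))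
    have hv0 : 0 ≤ v := hv.1
    have hv1 : v ≤ 1 := hv.2.trans (by rw [div_le_one hy]; exact ha)
    have : y - y*v = y * (1-v) := by ring
    rw [this, Real.mul_rpow hy.le hv0, Real.mul_rpow hy.le (by linarith)]
    ring
  rw [h3, intervalIntegral.integral_const_mul, ← mul_assoc]
  congr 1
  rw [show α + 1 - γ = 1 + (α + -γ) by ring, Real.rpow_add hy, Real.rpow_one,
    ← Real.rpow_add hy]

lemma F_cont (hα : -1 < α) (hγ : γ < 1) :
    ContinuousOn (fun x => ∫ v in (0:ℝ)..x, v ^ α * (1 - v) ^ (-γ)) (Icc 0 1) := by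
  have h := intervalIntegral.continuousOn_primitive_interval (a := (0:ℝ)) (b := (1:ℝ))
    (μ := volume) (f := fun v : ℝ => v ^ α * (1 - v) ^ (-γ)) ?_
  · rwa [Set.uIcc_of_le (by norm_num : (0:ℝ) ≤ 1)] at h
  · rw [Set.uIcc_of_le (by norm_num : (0:ℝ) ≤ 1), integrableOn_Icc_iff_integrableOn_Ioc]
    exact (intervalIntegrable_iff_integrableOn_Ioc_of_le (by norm_num)).mp (intInt_beta hα hγ)

lemma g_cont (hα : -1 < α) (hγ : γ < 1) (ha : 0 < a) (hab : a < b) :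
    ContinuousOn (fun y => y ^ (1-γ) * ∫ v in (0:ℝ)..(a/y), v ^ α * (1 - v) ^ (-γ))
      (Icc a b) := by
  apply ContinuousOn.mul
  · exact ContinuousOn.rpow_const continuousOn_id
      (fun x hx => Or.inl (ne_of_gt (lt_of_lt_of_le ha hx.1)))
  · apply (F_cont hα hγ).comp
    · exact continuousOn_const.div continuousOn_id
        (fun x hx => ne_of_gt (lt_of_lt_of_le ha hx.1))
    · intro y hy
      have hy0 : 0 < y := lt_of_lt_of_le ha hy.1
      constructor
      · positivity
      · rw [div_le_one hy0]; exact hy.1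

lemma outer_sub (hα : -1 < α) (hγ : γ < 1) (ha : 0 < a) (hab : a < b) (hc : c ∈ Ioc a b) :
    (∫ y in c..b, y ^ (1-γ) * ∫ v in (0:ℝ)..(a/y), v ^ α * (1 - v) ^ (-γ))
      = a ^ (2-γ) * ∫ v in (a/b)..(a/c), v ^ (γ-3) *
          ∫ w in (0:ℝ)..v, w ^ α * (1 - w) ^ (-γ) := by
  have hb : 0 < b := ha.trans hab
  have hc0 : 0 < c := ha.trans hc.1
  have hdiv : a/b ≤ a/c := by gcongr; exact hc.2
  have hdivb : 0 < a/b := by positivity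
  have huIcc : Set.uIcc (a/b) (a/c) = Icc (a/b) (a/c) := Set.uIcc_of_le hdiv
  set g : ℝ → ℝ := fun y => y ^ (1-γ) * ∫ v in (0:ℝ)..(a/y), v ^ α * (1 - v) ^ (-γ) with hg
  have himg : ∀ x ∈ Set.uIcc (a/b) (a/c), a / x ∈ Icc a b := by
    intro x hx
    rw [huIcc] at hx
    have hx0 : 0 < x := lt_of_lt_of_le hdivb hx.1
    constructor
    · rw [le_div_iff₀ hx0]
      have hx1 : x ≤ 1 := hx.2.trans (by rw [div_le_one hc0]; exact hc.1.le)
      nlinarith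
    · rw [div_le_iff₀ hx0]
      have : a/b ≤ x := hx.1
      rw [div_le_iff₀ hb] at this
      nlinarith
  have key := intervalIntegral.integral_comp_smul_deriv' (a := a/b) (b := a/c)
    (f := fun x => a / x) (f' := fun x => -(a / x^2)) (g := g)
    (fun x hx => ?_) ?_ ?_
  · -- key : ∫ x in a/b..a/c, (-(a/x^2)) • g (a/x) = ∫ y in a/(a/b)..a/(a/c), g y
    have e1 : a / (a/b) = b := by field_simp
    have e2 : a / (a/c) = c := by field_simp
    rw [e1, e2] at key
    have lhs_eq : (∫ x in (a/b)..(a/c), (-(a / x^2)) • ((g ∘ fun x => a / x) x))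
        = ∫ x in (a/b)..(a/c), -(a ^ (2-γ) * (x ^ (γ-3) *
            ∫ w in (0:ℝ)..x, w ^ α * (1 - w) ^ (-γ))) := by
      apply intervalIntegral.integral_congr
      intro x hx
      rw [huIcc] at hx
      have hx0 : 0 < x := lt_of_lt_of_le hdivb hx.1
      show (-(a / x^2)) • g (a / x) = _
      rw [hg]
      simp only []
      rw [show a / (a/x) = x by field_simp]
      rw [smul_eq_mul]
      linear_combination (-(∫ v in (0:ℝ)..x, v ^ α * (1 - v) ^ (-γ))) * rpow_helper ha hx0 γ
    rw [lhs_eq] at key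
    rw [intervalIntegral.integral_neg, intervalIntegral.integral_const_mul] at key
    rw [intervalIntegral.integral_symm c b] at key
    linarith [key]
  · -- HasDerivAt
    rw [huIcc] at hx
    have hx0 : 0 < x := lt_of_lt_of_le hdivb hx.1
    have h := (hasDerivAt_inv hx0.ne').const_mul a
    simpa [div_eq_mul_inv, neg_div] using h
  · -- continuity of f'
    apply ContinuousOn.neg
    apply continuousOn_const.div
    · exact (continuousOn_id.pow 2)
    · intro x hx
      rw [huIcc] at hx
      have hx0 : 0 < x := lt_of_lt_of_le hdivb hx.1
      positivity
  · -- continuity of g on image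
    apply (g_cont hα hγ ha hab).mono
    rintro y ⟨x, hx, rfl⟩
    exact himg x hx

lemma ibp (hα : -1 < α) (hγ : γ < 1) (ha : 0 < a) (hab : a < b) (hc : c ∈ Ioc a b) :
    (∫ v in (a/b)..(a/c), v ^ (γ-3) * ∫ w in (0:ℝ)..v, w ^ α * (1 - w) ^ (-γ))
      = (a/c) ^ (γ-2)/(γ-2) * (∫ w in (0:ℝ)..(a/c), w ^ α * (1 - w) ^ (-γ))
        - (a/b) ^ (γ-2)/(γ-2) * (∫ w in (0:ℝ)..(a/b), w ^ α * (1 - w) ^ (-γ))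
        - (1/(γ-2)) * ∫ v in (a/b)..(a/c), v ^ (α+γ-2) * (1 - v) ^ (-γ) := by
  have hb : 0 < b := ha.trans hab
  have hc0 : 0 < c := ha.trans hc.1
  have hdiv : a/b ≤ a/c := by gcongr; exact hc.2
  have hdivb : 0 < a/b := by positivity
  have hdivc1 : a/c ≤ 1 := by rw [div_le_one hc0]; exact hc.1.le
  have hγ2 : γ - 2 ≠ 0 := by intro h; linarith
  have huIcc : Set.uIcc (a/b) (a/c) = Icc (a/b) (a/c) := Set.uIcc_of_le hdiv
  have hsub : Set.uIcc (a/b) (a/c) ⊆ Set.uIcc (0:ℝ) 1 := by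
    rw [huIcc, Set.uIcc_of_le (by norm_num : (0:ℝ) ≤ 1)]
    exact Icc_subset_Icc hdivb.le hdivc1
  have hm1 : Measurable (fun v : ℝ => v ^ α) := by measurability
  have hm2' : Measurable (fun v : ℝ => v ^ (-γ)) := by measurability
  have hm2 : Measurable (fun v : ℝ => (1 - v) ^ (-γ)) :=
    hm2'.comp (measurable_const.sub measurable_id)
  have hmeas : Measurable (fun v : ℝ => v ^ α * (1 - v) ^ (-γ)) := hm1.mul hm2
  have hF : ∀ x ∈ Set.uIcc (a/b) (a/c),
      HasDerivAt (fun u => ∫ w in (0:ℝ)..u, w ^ α * (1 - w) ^ (-γ))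
        (x ^ α * (1 - x) ^ (-γ)) x := by
    intro x hx
    rw [huIcc] at hx
    have hx0 : 0 < x := lt_of_lt_of_le hdivb hx.1
    have hx1 : x < 1 := lt_of_le_of_lt hx.2 (by rw [div_lt_one hc0]; exact hc.1)
    apply intervalIntegral.integral_hasDerivAt_right
    · apply (intInt_beta hα hγ).mono_set
      rw [Set.uIcc_of_le hx0.le, Set.uIcc_of_le (by norm_num : (0:ℝ) ≤ 1)]
      exact Icc_subset_Icc le_rfl hx1.le
    · exact hmeas.aestronglyMeasurable.stronglyMeasurableAtFilter
    · apply ContinuousAt.mul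
      · exact Real.continuousAt_rpow_const x α (Or.inl hx0.ne')
      · exact ContinuousAt.rpow_const (continuous_const.sub continuous_id).continuousAt
          (Or.inl (ne_of_gt (by linarith : (0:ℝ) < 1 - x)))
  have hV : ∀ x ∈ Set.uIcc (a/b) (a/c),
      HasDerivAt (fun u => u ^ (γ-2)/(γ-2)) (x ^ (γ-3)) x := by
    intro x hx
    rw [huIcc] at hx
    have hx0 : 0 < x := lt_of_lt_of_le hdivb hx.1
    have h := (Real.hasDerivAt_rpow_const (p := γ-2) (Or.inl hx0.ne')).div_const (γ-2)
    rw [show γ-2-1 = γ-3 by ring, mul_div_cancel_left₀ _ hγ2] at h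
    exact h
  have hu' : IntervalIntegrable (fun v : ℝ => v ^ α * (1 - v) ^ (-γ)) volume (a/b) (a/c) :=
    (intInt_beta hα hγ).mono_set hsub
  have hv' : IntervalIntegrable (fun v : ℝ => v ^ (γ-3)) volume (a/b) (a/c) := by
    apply ContinuousOn.intervalIntegrable
    apply ContinuousOn.rpow_const continuousOn_id
    intro x hx
    rw [huIcc] at hx
    exact Or.inl (lt_of_lt_of_le hdivb hx.1).ne'
  have key := intervalIntegral.integral_mul_deriv_eq_deriv_mul hF hV hu' hv'
  have e1 : (∫ v in (a/b)..(a/c), v ^ (γ-3) * ∫ w in (0:ℝ)..v, w ^ α * (1 - w) ^ (-γ))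
      = ∫ v in (a/b)..(a/c), (∫ w in (0:ℝ)..v, w ^ α * (1 - w) ^ (-γ)) * v ^ (γ-3) := by
    apply intervalIntegral.integral_congr; intro x _; exact mul_comm _ _
  have e2 : (∫ v in (a/b)..(a/c), (v ^ α * (1 - v) ^ (-γ)) * (v ^ (γ-2)/(γ-2)))
      = (1/(γ-2)) * ∫ v in (a/b)..(a/c), v ^ (α+γ-2) * (1 - v) ^ (-γ) := by
    rw [← intervalIntegral.integral_const_mul]
    apply intervalIntegral.integral_congr
    intro x hx
    rw [huIcc] at hx
    have hx0 : 0 < x := lt_of_lt_of_le hdivb hx.1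
    show (x ^ α * (1 - x) ^ (-γ)) * (x ^ (γ-2)/(γ-2)) = 1/(γ-2) * (x ^ (α+γ-2) * (1 - x) ^ (-γ))
    rw [show α+γ-2 = α+(γ-2) by ring, Real.rpow_add hx0]
    field_simp
  rw [e1, key, e2]
  ring

lemma key_eq (hα : -1 < α) (hγ : γ < 1) (ha : 0 < a) (hab : a < b) (hc : c ∈ Ioc a b) :
    (∫ y in c..b, y ^ (1-γ) * ∫ v in (0:ℝ)..(a/y), v ^ α * (1 - v) ^ (-γ))
      = a ^ (2-γ)/(2-γ) * (∫ v in (a/b)..(a/c), v ^ (α+γ-2) * (1 - v) ^ (-γ))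
        + b ^ (2-γ)/(2-γ) * (∫ w in (0:ℝ)..(a/b), w ^ α * (1 - w) ^ (-γ))
        - c ^ (2-γ)/(2-γ) * (∫ w in (0:ℝ)..(a/c), w ^ α * (1 - w) ^ (-γ)) := by
  have hb : 0 < b := ha.trans hab
  have hc0 : 0 < c := ha.trans hc.1
  rw [outer_sub hα hγ ha hab hc, ibp hα hγ ha hab hc]
  have hrule : ∀ z : ℝ, z/(γ-2) = -(z/(2-γ)) := fun z => by
    rw [show γ-2 = -(2-γ) by ring, div_neg]
  simp only [hrule]
  have f1 := rpow_flip ha hc0 γ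
  have f2 := rpow_flip ha hb γ
  linear_combination (-(∫ w in (0:ℝ)..(a/c), w ^ α * (1 - w) ^ (-γ))/(2-γ)) * f1
    + ((∫ w in (0:ℝ)..(a/b), w ^ α * (1 - w) ^ (-γ))/(2-γ)) * f2

end AuxDoubleIntegral

open Topology intervalIntegral in
/-- the double-integral identity of Lemma A.1(iii). -/
theorem double_integral_identity (α γ a b : ℝ) (hα : α ∈ Set.Ioo (-1 : ℝ) 1)
    (hγ : γ ∈ Set.Ioo (-1 : ℝ) 1) (ha : 0 < a) (hab : a < b) :
    (∫ y in a..b, y ^ (-α) * ∫ z in (0 : ℝ)..a, z ^ α * (y - z) ^ (-γ))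
      = a ^ (2 - γ) / (2 - γ) * (∫ v in (a / b)..1, v ^ (α + γ - 2) * (1 - v) ^ (-γ))
        + b ^ (2 - γ) / (2 - γ) * (∫ v in (0 : ℝ)..(a / b), v ^ α * (1 - v) ^ (-γ))
        - a ^ (2 - γ) / (2 - γ) * Beta (α + 1) (1 - γ) := by
  obtain ⟨hα1, hα2⟩ := hα
  obtain ⟨hγ1, hγ2⟩ := hγ
  have hb : 0 < b := ha.trans hab
  have hdivb : 0 < a/b := by positivity
  have hdivb1 : a/b ≤ 1 := by rw [div_le_one hb]; exact hab.le
  -- Step 1 : rewrite the LHS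
  have step1 : (∫ y in a..b, y ^ (-α) * ∫ z in (0 : ℝ)..a, z ^ α * (y - z) ^ (-γ))
      = ∫ y in a..b, y ^ (1-γ) * ∫ v in (0:ℝ)..(a/y), v ^ α * (1 - v) ^ (-γ) := by
    apply intervalIntegral.integral_congr
    intro y hy
    rw [Set.uIcc_of_le hab.le] at hy
    have hy0 : 0 < y := lt_of_lt_of_le ha hy.1
    show y ^ (-α) * _ = _
    rw [inner_sub ha hy.1 α γ, ← mul_assoc, ← Real.rpow_add hy0,
      show -α + (α + 1 - γ) = 1-γ by ring]
  rw [step1]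
  -- the filter
  set l : Filter ℝ := 𝓝[Ioc a b] a with hl
  have hne : l.NeBot := by
    have h1 : (𝓝[Ioo a b] a).NeBot := by
      rw [nhdsWithin_Ioo_eq_nhdsGT hab]; infer_instance
    exact Filter.neBot_of_le (f := 𝓝[Ioo a b] a) (nhdsWithin_mono a Ioo_subset_Ioc_self)
  have hev : ∀ᶠ c in l, c ∈ Ioc a b := eventually_mem_nhdsWithin
  -- LHS tendsto
  have hgint : IntegrableOn (fun y => y ^ (1-γ) * ∫ v in (0:ℝ)..(a/y),
      v ^ α * (1 - v) ^ (-γ)) (Set.uIcc a b) volume := by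
    rw [Set.uIcc_of_le hab.le]
    exact (g_cont hα1 hγ2 ha hab).integrableOn_Icc
  have T1 : Tendsto (fun c => ∫ y in c..b, y ^ (1-γ) * ∫ v in (0:ℝ)..(a/y),
      v ^ α * (1 - v) ^ (-γ)) l
      (𝓝 (∫ y in a..b, y ^ (1-γ) * ∫ v in (0:ℝ)..(a/y), v ^ α * (1 - v) ^ (-γ))) := by
    have hcont := intervalIntegral.continuousOn_primitive_interval_left hgint
    have hmem : a ∈ Set.uIcc a b := by
      rw [Set.uIcc_of_le hab.le]; exact ⟨le_rfl, hab.le⟩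
    have := (hcont a hmem).tendsto
    apply this.mono_left
    apply nhdsWithin_mono
    rw [Set.uIcc_of_le hab.le]
    exact Ioc_subset_Icc_self
  -- a/c tendsto 1 within Icc
  have Tdiv : ∀ (s : Set ℝ), (∀ c ∈ Ioc a b, a/c ∈ s) → (1:ℝ) ∈ s →
      Tendsto (fun c => a/c) l (𝓝[s] 1) := by
    intro s hs _
    apply tendsto_nhdsWithin_of_tendsto_nhds_of_eventually_within
    · have hca : ContinuousAt (fun c : ℝ => a/c) a :=
        (continuousAt_const.div continuousAt_id ha.ne')
      have : Tendsto (fun c : ℝ => a/c) (𝓝 a) (𝓝 (a/a)) := hca.tendsto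
      rw [div_self ha.ne'] at this
      exact this.mono_left nhdsWithin_le_nhds
    · exact hev.mono (fun c hc => hs c hc)
  have hmemdiv : ∀ c ∈ Ioc a b, a/c ∈ Icc (a/b) 1 := by
    intro c hc
    have hc0 : 0 < c := ha.trans hc.1
    constructor
    · gcongr; exact hc.2
    · rw [div_le_one hc0]; exact hc.1.le
  have hmemdiv01 : ∀ c ∈ Ioc a b, a/c ∈ Icc (0:ℝ) 1 := fun c hc =>
    ⟨div_nonneg ha.le (ha.trans hc.1).le, (hmemdiv c hc).2⟩
  -- integrability of the second integrand on a/b..1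
  have hI2 : IntervalIntegrable (fun v : ℝ => v ^ (α+γ-2) * (1 - v) ^ (-γ))
      volume (a/b) 1 := by
    have f0 : IntervalIntegrable (fun x : ℝ => x ^ (-γ)) volume (1 - (a/b)) (1 - 1) :=
      intervalIntegral.intervalIntegrable_rpow' (by linarith)
    have f1 := f0.comp_sub_left 1
    simp only [sub_sub_cancel] at f1
    apply f1.continuousOn_mul
    apply ContinuousOn.rpow_const continuousOn_id
    intro x hx
    rw [Set.uIcc_of_le hdivb1] at hx
    exact Or.inl (lt_of_lt_of_le hdivb hx.1).ne'
  -- T2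
  have T2 : Tendsto (fun c => ∫ v in (a/b)..(a/c), v ^ (α+γ-2) * (1 - v) ^ (-γ)) l
      (𝓝 (∫ v in (a/b)..1, v ^ (α+γ-2) * (1 - v) ^ (-γ))) := by
    have hcw : ContinuousWithinAt (fun x => ∫ v in (a/b)..x,
        v ^ (α+γ-2) * (1 - v) ^ (-γ)) (Icc (a/b) 1) 1 := by
      apply intervalIntegral.continuousWithinAt_primitive (measure_singleton 1)
      rwa [min_self, max_eq_right hdivb1]
    exact hcw.tendsto.comp (Tdiv _ hmemdiv ⟨hdivb1, le_rfl⟩)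
  -- T3 : c ^ (2-γ)
  have T3 : Tendsto (fun c : ℝ => c ^ (2-γ)) l (𝓝 (a ^ (2-γ))) := by
    have := (Real.continuousAt_rpow_const a (2-γ) (Or.inl ha.ne')).tendsto
    exact this.mono_left nhdsWithin_le_nhds
  -- T4 : F (a/c)
  have T4 : Tendsto (fun c => ∫ w in (0:ℝ)..(a/c), w ^ α * (1 - w) ^ (-γ)) l
      (𝓝 (∫ w in (0:ℝ)..1, w ^ α * (1 - w) ^ (-γ))) := by
    have hcw : ContinuousWithinAt (fun x => ∫ v in (0:ℝ)..x,
        v ^ α * (1 - v) ^ (-γ)) (Icc 0 1) 1 := (F_cont hα1 hγ2) 1 ⟨zero_le_one, le_rfl⟩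
    exact hcw.tendsto.comp (Tdiv _ hmemdiv01 ⟨zero_le_one, le_rfl⟩)
  -- combined RHS tendsto
  have Tcomb : Tendsto (fun c => a ^ (2-γ)/(2-γ) *
        (∫ v in (a/b)..(a/c), v ^ (α+γ-2) * (1 - v) ^ (-γ))
      + b ^ (2-γ)/(2-γ) * (∫ w in (0:ℝ)..(a/b), w ^ α * (1 - w) ^ (-γ))
      - c ^ (2-γ)/(2-γ) * (∫ w in (0:ℝ)..(a/c), w ^ α * (1 - w) ^ (-γ))) l
      (𝓝 (a ^ (2-γ)/(2-γ) * (∫ v in (a/b)..1, v ^ (α+γ-2) * (1 - v) ^ (-γ))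
        + b ^ (2-γ)/(2-γ) * (∫ w in (0:ℝ)..(a/b), w ^ α * (1 - w) ^ (-γ))
        - a ^ (2-γ)/(2-γ) * (∫ w in (0:ℝ)..1, w ^ α * (1 - w) ^ (-γ)))) := by
    apply Tendsto.sub
    · exact (Tendsto.const_mul _ T2).add tendsto_const_nhds
    · exact ((T3.div_const _).mul T4)
  -- eventual equality
  have hEv : (fun c => ∫ y in c..b, y ^ (1-γ) * ∫ v in (0:ℝ)..(a/y),
        v ^ α * (1 - v) ^ (-γ)) =ᶠ[l]
      (fun c => a ^ (2-γ)/(2-γ) * (∫ v in (a/b)..(a/c), v ^ (α+γ-2) * (1 - v) ^ (-γ))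
        + b ^ (2-γ)/(2-γ) * (∫ w in (0:ℝ)..(a/b), w ^ α * (1 - w) ^ (-γ))
        - c ^ (2-γ)/(2-γ) * (∫ w in (0:ℝ)..(a/c), w ^ α * (1 - w) ^ (-γ))) :=
    hev.mono (fun c hc => key_eq hα1 hγ2 ha hab hc)
  have Tfin := Filter.Tendsto.congr' hEv T1
  have := tendsto_nhds_unique Tfin Tcomb
  rw [this, beta_eval hα1 hγ2]
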